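/- Let r₀ ≥ 0, ζ > 0, and let L : [0,∞) → (0,∞) be measurable, differentiable and nonincreasing on [r₀, ∞), with L(x) → 0 as x → ∞ and x·L(x) ≥ ζ·(−L′(x)) for all x ≥ r₀. Then for every λ > 1/(πζ), the double integral T₂ = ∫_0^∞ ∫_{r₀}^∞ 2πλ·r·t·exp( −πλr² − 2πλ·t·∫_{r}^∞ x·L(x)/(1+t·L(x)) dx ) dr dt satisfies T₂ ≤ (2πλ/((2πλζ−1)(2πλζ−2))) · ∫_{r₀}^∞ (r / L(r)²)·e^{−πλ r²} dr. -/

import Mathlib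

open MeasureTheory

/-- The exponential `x ↦ e^{-x}` extended to `[0,∞]`, with `e^{-∞} = 0`. -/
noncomputable def expNeg (x : ENNReal) : ENNReal :=
  if x = ⊤ then 0 else ENNReal.ofReal (Real.exp (-x.toReal))


section AuxT2
open Set Filter

lemma expNeg_ofReal {a : ℝ} (ha : 0 ≤ a) : expNeg (ENNReal.ofReal a) = ENNReal.ofReal (Real.exp (-a)) := by
  rw [expNeg, if_neg ENNReal.ofReal_ne_top, ENNReal.toReal_ofReal ha]

lemma expNeg_anti {a b : ENNReal} (h : a ≤ b) : expNeg b ≤ expNeg a := by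
  rcases eq_or_ne b ⊤ with rfl | hb
  · simp [expNeg]
  · have ha : a ≠ ⊤ := fun h' => hb (top_le_iff.mp (h' ▸ h))
    rw [expNeg, expNeg, if_neg hb, if_neg ha]
    exact ENNReal.ofReal_le_ofReal (Real.exp_le_exp.mpr (neg_le_neg ((ENNReal.toReal_le_toReal ha hb).mpr h)))

lemma derivL_nonpos {L : ℝ → ℝ} {d x : ℝ} (hd : HasDerivAt L d x)
    (hmono : ∀ y, x ≤ y → L y ≤ L x) : d ≤ 0 := by
  have h := (hasDerivAt_iff_tendsto_slope.mp hd).mono_left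
    (nhdsWithin_mono x (by intro y hy; exact ne_of_gt hy : Ioi x ⊆ {x}ᶜ))
  refine le_of_tendsto h ?_
  filter_upwards [self_mem_nhdsWithin] with y hy
  rw [slope_def_field]
  exact div_nonpos_iff.mpr (Or.inr ⟨by linarith [hmono y (le_of_lt hy)], by linarith [hy.out]⟩)

lemma tInt {c β : ℝ} (hc : 0 < c) (hβ : 2 < β) :
    ∫⁻ t in Set.Ioi (0:ℝ), ENNReal.ofReal (t * (1 + c*t) ^ (-β)) =
      ENNReal.ofReal (1 / (c^2 * (β - 1) * (β - 2))) := by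
  have hβ1 : β ≠ 1 := by linarith
  have hβ2 : β ≠ 2 := by linarith
  have hcne : c ≠ 0 := ne_of_gt hc
  have h1β : (1 - β : ℝ) ≠ 0 := by intro h; apply hβ1; linarith
  have h2β : (2 - β : ℝ) ≠ 0 := by intro h; apply hβ2; linarith
  set F : ℝ → ℝ := fun t => (1/c^2) * ((1 + c*t) ^ (2 - β) / (2 - β) - (1 + c*t) ^ (1 - β) / (1 - β)) with hF
  have hbase : ∀ t : ℝ, 0 ≤ t → (0:ℝ) < 1 + c * t := fun t ht => by nlinarith
  have hderiv : ∀ t ∈ Ici (0:ℝ), HasDerivAt F (t * (1 + c*t) ^ (-β)) t := by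
    intro t ht
    have hu : (0:ℝ) < 1 + c * t := hbase t ht
    have hlin : HasDerivAt (fun t : ℝ => 1 + c * t) c t := by
      simpa using ((hasDerivAt_id t).const_mul c).const_add 1
    have h1 : HasDerivAt (fun t => (1 + c*t) ^ (2 - β)) (c * (2 - β) * (1 + c*t) ^ (2 - β - 1)) t :=
      hlin.rpow_const (Or.inl (ne_of_gt hu))
    have h2 : HasDerivAt (fun t => (1 + c*t) ^ (1 - β)) (c * (1 - β) * (1 + c*t) ^ (1 - β - 1)) t :=
      hlin.rpow_const (Or.inl (ne_of_gt hu))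
    have h3 := (((h1.div_const (2 - β)).sub (h2.div_const (1 - β))).const_mul (1/c^2))
    refine h3.congr_deriv ?_
    symm
    have e1 : (2 - β - 1 : ℝ) = 1 + (-β) := by ring
    have e2 : (1 - β - 1 : ℝ) = -β := by ring
    rw [e1, e2, Real.rpow_add hu, Real.rpow_one]
    field_simp
    ring
  have hnn : ∀ t ∈ Ioi (0:ℝ), 0 ≤ t * (1 + c*t) ^ (-β) := fun t ht =>
    mul_nonneg (le_of_lt ht) (Real.rpow_nonneg (le_of_lt (hbase t (le_of_lt ht))) _)
  have htend : Tendsto F atTop (nhds 0) := by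
    have hlin : Tendsto (fun t : ℝ => 1 + c * t) atTop atTop :=
      tendsto_atTop_add_const_left _ 1 (Tendsto.const_mul_atTop hc tendsto_id)
    have k1 : Tendsto (fun t : ℝ => (1 + c*t) ^ (2 - β)) atTop (nhds 0) := by
      have : (2 - β : ℝ) = -(β - 2) := by ring
      rw [this]
      exact (tendsto_rpow_neg_atTop (by linarith)).comp hlin
    have k2 : Tendsto (fun t : ℝ => (1 + c*t) ^ (1 - β)) atTop (nhds 0) := by
      have : (1 - β : ℝ) = -(β - 1) := by ring
      rw [this]
      exact (tendsto_rpow_neg_atTop (by linarith)).comp hlin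
    have h := (((k1.div_const (2 - β)).sub (k2.div_const (1 - β))).const_mul (1/c^2))
    have h0 : 1/c^2 * ((0:ℝ)/(2-β) - 0/(1-β)) = 0 := by simp
    rw [← h0]
    exact h
  have hcont : ContinuousWithinAt F (Ici 0) 0 := (hderiv 0 self_mem_Ici).continuousAt.continuousWithinAt
  have hint : IntegrableOn (fun t => t * (1 + c*t) ^ (-β)) (Ioi (0:ℝ)) :=
    integrableOn_Ioi_deriv_of_nonneg hcont (fun x (hx : x ∈ Ioi (0:ℝ)) => hderiv x (Set.mem_Ici.mpr (le_of_lt hx))) hnn htend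
  have hval : ∫ t in Ioi (0:ℝ), t * (1 + c*t) ^ (-β) = 0 - F 0 :=
    integral_Ioi_of_hasDerivAt_of_nonneg hcont (fun x (hx : x ∈ Ioi (0:ℝ)) => hderiv x (Set.mem_Ici.mpr (le_of_lt hx))) hnn htend
  rw [← ofReal_integral_eq_lintegral_ofReal hint
    ((ae_restrict_iff' measurableSet_Ioi).mpr (Filter.Eventually.of_forall hnn))]
  congr 1
  rw [hval, hF]
  simp only [mul_zero, add_zero, Real.one_rpow]
  have hD : c^2*(β-1)*(β-2) ≠ 0 := by
    have : (0:ℝ) < c^2*(β-1)*(β-2) := mul_pos (mul_pos (pow_pos hc 2) (by linarith)) (by linarith)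
    exact ne_of_gt this
  rw [eq_div_iff hD]
  field_simp
  ring

lemma logBound {r₀ ζ t r : ℝ} {L : ℝ → ℝ} (hr₀ : 0 ≤ r₀) (hζ : 0 < ζ) (ht : 0 < t) (hr : r₀ < r)
    (hLmeas : Measurable L)
    (hLpos : ∀ x, 0 ≤ x → 0 < L x)
    (hLderiv : ∀ x, r₀ ≤ x → HasDerivAt L (deriv L x) x)
    (hLmono : ∀ x y, r₀ ≤ x → x ≤ y → L y ≤ L x)
    (hLlim : Tendsto L atTop (nhds 0))
    (hreg : ∀ x, r₀ ≤ x → ζ * (-(deriv L x)) ≤ x * L x) :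
    ENNReal.ofReal (ζ/t * Real.log (1 + t * L r)) ≤
      ∫⁻ x in Set.Ioi r, ENNReal.ofReal (x * L x / (1 + t * L x)) := by
  set g : ℝ → ℝ := fun x => ζ * (-(deriv L x)) / (1 + t * L x) with hg
  set φ : ℝ → ℝ := fun x => x * L x / (1 + t * L x) with hφ
  have htne : t ≠ 0 := ne_of_gt ht
  have hden : ∀ x, 0 ≤ x → (1:ℝ) ≤ 1 + t * L x := fun x hx => by nlinarith [hLpos x hx]
  have hdenpos : ∀ x, 0 ≤ x → (0:ℝ) < 1 + t * L x := fun x hx => lt_of_lt_of_le one_pos (hden x hx)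
  have hgmeas : Measurable g :=
    (((measurable_deriv L).neg.const_mul ζ)).div ((hLmeas.const_mul t).const_add 1)
  have hφmeas : Measurable φ :=
    (measurable_id.mul hLmeas).div ((hLmeas.const_mul t).const_add 1)
  have key : ∀ R, r ≤ R →
      ENNReal.ofReal (ζ/t * (Real.log (1 + t * L r) - Real.log (1 + t * L R))) ≤
        ∫⁻ x in Set.Ioi r, ENNReal.ofReal (φ x) := by
    intro R hrR
    have hsub : ∀ x, x ∈ Set.Ioc r R → r₀ ≤ x ∧ 0 ≤ x ∧ x ≤ R :=
      fun x hx => ⟨by linarith [hx.1], by linarith [hx.1], hx.2⟩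
    have hM : ∀ x ∈ Set.Ioc r R, ‖g x‖ ≤ R * L r₀ := by
      intro x hx
      obtain ⟨hx0, hx0', hxR⟩ := hsub x hx
      have hd := hLderiv x hx0
      have hdnp : deriv L x ≤ 0 := derivL_nonpos hd (fun y hy => hLmono x y hx0 hy)
      have hnum : 0 ≤ ζ * (-(deriv L x)) := mul_nonneg hζ.le (by linarith)
      have h1 : g x ≤ ζ * (-(deriv L x)) := div_le_self hnum (hden x hx0')
      have h2 : ζ * (-(deriv L x)) ≤ x * L x := hreg x hx0
      have h3 : x * L x ≤ R * L r₀ :=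
        mul_le_mul hxR (hLmono r₀ x le_rfl hx0) (hLpos x hx0').le (le_trans hx0' hxR)
      have hgnn : (0:ℝ) ≤ g x := div_nonneg hnum (le_of_lt (hdenpos x hx0'))
      rw [Real.norm_eq_abs, abs_of_nonneg hgnn]; linarith
    have hgint : IntegrableOn g (Set.Ioc r R) :=
      Measure.integrableOn_of_bounded measure_Ioc_lt_top.ne hgmeas.aestronglyMeasurable
        ((ae_restrict_iff' measurableSet_Ioc).mpr (Filter.Eventually.of_forall hM))
    have hφnn : ∀ x ∈ Set.Ioc r R, (0:ℝ) ≤ φ x := by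
      intro x hx
      obtain ⟨hx0, hx0', hxR⟩ := hsub x hx
      exact div_nonneg (mul_nonneg hx0' (hLpos x hx0').le) (le_of_lt (hdenpos x hx0'))
    have hMφ : ∀ x ∈ Set.Ioc r R, ‖φ x‖ ≤ R * L r₀ := by
      intro x hx
      obtain ⟨hx0, hx0', hxR⟩ := hsub x hx
      have h1 : φ x ≤ x * L x := div_le_self (mul_nonneg hx0' (hLpos x hx0').le) (hden x hx0')
      have h3 : x * L x ≤ R * L r₀ :=
        mul_le_mul hxR (hLmono r₀ x le_rfl hx0) (hLpos x hx0').le (le_trans hx0' hxR)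
      rw [Real.norm_eq_abs, abs_of_nonneg (hφnn x hx)]; linarith
    have hφint : IntegrableOn φ (Set.Ioc r R) :=
      Measure.integrableOn_of_bounded measure_Ioc_lt_top.ne hφmeas.aestronglyMeasurable
        ((ae_restrict_iff' measurableSet_Ioc).mpr (Filter.Eventually.of_forall hMφ))
    have hle : ∀ x ∈ Set.Ioc r R, g x ≤ φ x := by
      intro x hx
      obtain ⟨hx0, hx0', hxR⟩ := hsub x hx
      exact (div_le_div_iff_of_pos_right (hdenpos x hx0')).mpr (hreg x hx0)
    have hmono_int : ∫ x in Set.Ioc r R, g x ≤ ∫ x in Set.Ioc r R, φ x :=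
      setIntegral_mono_on hgint hφint measurableSet_Ioc hle
    set H : ℝ → ℝ := fun x => -(ζ/t) * Real.log (1 + t * L x) with hH
    have hHd : ∀ x ∈ Set.uIcc r R, HasDerivAt H (g x) x := by
      intro x hx
      rw [Set.uIcc_of_le hrR] at hx
      have hx0 : r₀ ≤ x := by linarith [hx.1]
      have hx0' : (0:ℝ) ≤ x := by linarith [hx.1]
      have hd := hLderiv x hx0
      have hpos := hdenpos x hx0'
      have hlog := (((hd.const_mul t).const_add 1).log (ne_of_gt hpos)).const_mul (-(ζ/t))
      refine hlog.congr_deriv ?_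
      symm
      rw [hg]
      field_simp
    have hgii : IntervalIntegrable g volume r R :=
      (intervalIntegrable_iff_integrableOn_Ioc_of_le hrR).mpr hgint
    have hFTC : ∫ x in r..R, g x = H R - H r :=
      intervalIntegral.integral_eq_sub_of_hasDerivAt hHd hgii
    rw [intervalIntegral.integral_of_le hrR] at hFTC
    have hval : ζ/t * (Real.log (1 + t * L r) - Real.log (1 + t * L R)) = ∫ x in Set.Ioc r R, g x := by
      rw [hFTC, hH]; ring
    calc ENNReal.ofReal (ζ/t * (Real.log (1 + t * L r) - Real.log (1 + t * L R)))
        = ENNReal.ofReal (∫ x in Set.Ioc r R, g x) := by rw [hval]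
      _ ≤ ENNReal.ofReal (∫ x in Set.Ioc r R, φ x) := ENNReal.ofReal_le_ofReal hmono_int
      _ = ∫⁻ x in Set.Ioc r R, ENNReal.ofReal (φ x) :=
          ofReal_integral_eq_lintegral_ofReal hφint
            ((ae_restrict_iff' measurableSet_Ioc).mpr (Filter.Eventually.of_forall hφnn))
      _ ≤ ∫⁻ x in Set.Ioi r, ENNReal.ofReal (φ x) := lintegral_mono_set Set.Ioc_subset_Ioi_self
  have l1 : Tendsto (fun R => Real.log (1 + t * L R)) atTop (nhds 0) := by
    have h1 : Tendsto (fun R => 1 + t * L R) atTop (nhds 1) := by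
      have := (hLlim.const_mul t).const_add 1
      simpa using this
    have h2 := (Real.continuousAt_log one_ne_zero).tendsto.comp h1
    simpa [Function.comp_def] using h2
  have l2 : Tendsto (fun R => ENNReal.ofReal (ζ/t * (Real.log (1 + t * L r) - Real.log (1 + t * L R))))
      atTop (nhds (ENNReal.ofReal (ζ/t * Real.log (1 + t * L r)))) := by
    have h3 : Tendsto (fun R => ζ/t * (Real.log (1 + t * L r) - Real.log (1 + t * L R)))
        atTop (nhds (ζ/t * (Real.log (1 + t * L r) - 0))) :=
      ((tendsto_const_nhds (x := Real.log (1 + t * L r))).sub l1).const_mul (ζ/t)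
    have h4 := (ENNReal.continuous_ofReal.tendsto _).comp h3
    simpa [Function.comp_def] using h4
  exact le_of_tendsto l2 (Filter.eventually_atTop.mpr ⟨r, key⟩)

end AuxT2

/-- Let `r₀ ≥ 0`, `ζ > 0`, and `L : [0,∞) → (0,∞)` measurable, differentiable
and nonincreasing on `[r₀,∞)`, with `L(x) → 0` as `x → ∞` and `x·L(x) ≥ ζ·(−L′(x))` for
`x ≥ r₀`. Then for every `λ > 1/(πζ)`, the double integral
`T₂ = ∫_0^∞ ∫_{r₀}^∞ 2πλ·r·t·exp(−πλr² − 2πλ·t·∫_{r}^∞ x·L(x)/(1+t·L(x)) dx) dr dt`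
satisfies `T₂ ≤ (2πλ/((2πλζ−1)(2πλζ−2))) · ∫_{r₀}^∞ (r/L(r)²)·e^{−πλr²} dr`. -/
theorem second_negative_moment_T2_bound
    (r₀ ζ lam : ℝ) (hr₀ : 0 ≤ r₀) (hζ : 0 < ζ) (L L' : ℝ → ℝ)
    (hLmeas : Measurable L)
    (hLpos : ∀ x, 0 ≤ x → 0 < L x)
    (hLderiv : ∀ x, r₀ ≤ x → HasDerivAt L (L' x) x)
    (hLmono : ∀ x y, r₀ ≤ x → x ≤ y → L y ≤ L x)
    (hLlim : Filter.Tendsto L Filter.atTop (nhds 0))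
    (hreg : ∀ x, r₀ ≤ x → ζ * (-(L' x)) ≤ x * L x)
    (hlam : 1 / (Real.pi * ζ) < lam) :
    (∫⁻ t in Set.Ioi (0 : ℝ), ∫⁻ r in Set.Ioi r₀,
        ENNReal.ofReal (2 * Real.pi * lam * r * t) *
          expNeg (ENNReal.ofReal (Real.pi * lam * r ^ 2) +
            ENNReal.ofReal (2 * Real.pi * lam * t) *
              ∫⁻ x in Set.Ioi r, ENNReal.ofReal (x * L x / (1 + t * L x)))) ≤
      ENNReal.ofReal (2 * Real.pi * lam /
          ((2 * Real.pi * lam * ζ - 1) * (2 * Real.pi * lam * ζ - 2))) *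
        ∫⁻ r in Set.Ioi r₀,
          ENNReal.ofReal (r / L r ^ 2 * Real.exp (-(Real.pi * lam * r ^ 2))) := by

  have hπ : (0:ℝ) < Real.pi := Real.pi_pos
  have hπζ : (0:ℝ) < Real.pi * ζ := mul_pos hπ hζ
  have hlam0 : (0:ℝ) < lam := lt_trans (by positivity) hlam
  have hpilam : (0:ℝ) < Real.pi * lam := mul_pos hπ hlam0
  set β := 2 * Real.pi * lam * ζ with hβdef
  have hβ : 2 < β := by
    have h1 : 1 < lam * (Real.pi * ζ) := by
      rw [div_lt_iff₀ hπζ] at hlam; exact hlam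
    rw [hβdef]; nlinarith
  have hβ0 : (0:ℝ) ≤ β := by linarith
  have hβ1 : (0:ℝ) < β - 1 := by linarith
  have hβ2 : (0:ℝ) < β - 2 := by linarith
  have hLderiv' : ∀ x, r₀ ≤ x → HasDerivAt L (deriv L x) x := fun x hx =>
    ((hLderiv x hx).deriv) ▸ hLderiv x hx
  have hregd : ∀ x, r₀ ≤ x → ζ * (-(deriv L x)) ≤ x * L x := fun x hx =>
    ((hLderiv x hx).deriv) ▸ hreg x hx
  set f₂ : ℝ → ℝ → ℝ := fun t r =>
    (2 * Real.pi * lam * r * Real.exp (-(Real.pi * lam * r^2))) * (t * (1 + L r * t) ^ (-β))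
    with hf2
  -- Step A : pointwise bound
  have stepA : ∀ t ∈ Set.Ioi (0:ℝ), ∀ r ∈ Set.Ioi r₀,
      ENNReal.ofReal (2 * Real.pi * lam * r * t) *
        expNeg (ENNReal.ofReal (Real.pi * lam * r ^ 2) +
          ENNReal.ofReal (2 * Real.pi * lam * t) *
            ∫⁻ x in Set.Ioi r, ENNReal.ofReal (x * L x / (1 + t * L x))) ≤
      ENNReal.ofReal (f₂ t r) := by
    intro t ht r hr
    have ht' : (0:ℝ) < t := ht
    have hr' : r₀ < r := hr
    have h0r : (0:ℝ) ≤ r := le_trans hr₀ hr'.le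
    have hLr : 0 < L r := hLpos r h0r
    have hu : (1:ℝ) ≤ 1 + t * L r := by nlinarith
    have hu' : (0:ℝ) < 1 + t * L r := lt_of_lt_of_le one_pos hu
    have hlog : 0 ≤ Real.log (1 + t * L r) := Real.log_nonneg hu
    have hJ := logBound hr₀ hζ ht' hr' hLmeas hLpos hLderiv' hLmono hLlim hregd
    have hq1 : (0:ℝ) ≤ Real.pi * lam * r ^ 2 := by positivity
    have hq2 : (0:ℝ) ≤ β * Real.log (1 + t * L r) := mul_nonneg hβ0 hlog
    have h1 : ENNReal.ofReal (Real.pi * lam * r ^ 2 + β * Real.log (1 + t * L r)) ≤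
        ENNReal.ofReal (Real.pi * lam * r ^ 2) +
          ENNReal.ofReal (2 * Real.pi * lam * t) *
            ∫⁻ x in Set.Ioi r, ENNReal.ofReal (x * L x / (1 + t * L x)) := by
      rw [ENNReal.ofReal_add hq1 hq2]
      refine add_le_add le_rfl ?_
      calc ENNReal.ofReal (β * Real.log (1 + t * L r))
          = ENNReal.ofReal (2 * Real.pi * lam * t) *
              ENNReal.ofReal (ζ/t * Real.log (1 + t * L r)) := by
            rw [← ENNReal.ofReal_mul (by positivity)]
            congr 1
            have : t ≠ 0 := ne_of_gt ht'
            field_simp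
            ring
        _ ≤ _ := mul_le_mul_right hJ _
    have h2 := expNeg_anti h1
    rw [expNeg_ofReal (by linarith)] at h2
    calc ENNReal.ofReal (2 * Real.pi * lam * r * t) *
          expNeg (ENNReal.ofReal (Real.pi * lam * r ^ 2) +
            ENNReal.ofReal (2 * Real.pi * lam * t) *
              ∫⁻ x in Set.Ioi r, ENNReal.ofReal (x * L x / (1 + t * L x)))
        ≤ ENNReal.ofReal (2 * Real.pi * lam * r * t) *
            ENNReal.ofReal (Real.exp (-(Real.pi * lam * r ^ 2 + β * Real.log (1 + t * L r)))) :=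
          mul_le_mul_right h2 _
      _ = ENNReal.ofReal (f₂ t r) := by
          rw [← ENNReal.ofReal_mul (by positivity)]
          congr 1
          have e : Real.exp (-(Real.pi * lam * r ^ 2 + β * Real.log (1 + t * L r))) =
              Real.exp (-(Real.pi * lam * r ^ 2)) *
                Real.exp (Real.log (1 + t * L r) * (-β)) := by
            rw [← Real.exp_add]; congr 1; ring
          rw [hf2]
          show 2 * Real.pi * lam * r * t * Real.exp (-(Real.pi * lam * r ^ 2 + β * Real.log (1 + t * L r))) =
            (2 * Real.pi * lam * r * Real.exp (-(Real.pi * lam * r^2))) * (t * (1 + L r * t) ^ (-β))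
          rw [e, show (1 + L r * t) = 1 + t * L r by ring, Real.rpow_def_of_pos hu']
          ring
  -- measurability of f₂ for swap
  have hf2meas : Measurable (fun p : ℝ × ℝ => ENNReal.ofReal (f₂ p.1 p.2)) := by
    apply ENNReal.measurable_ofReal.comp
    rw [hf2]
    fun_prop
  -- inner t-integral
  have innerEq : ∀ r ∈ Set.Ioi r₀,
      (∫⁻ t in Set.Ioi (0:ℝ), ENNReal.ofReal (f₂ t r)) =
        ENNReal.ofReal (2 * Real.pi * lam / ((β - 1) * (β - 2))) *
          ENNReal.ofReal (r / L r ^ 2 * Real.exp (-(Real.pi * lam * r ^ 2))) := by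
    intro r hr
    have h0r : (0:ℝ) ≤ r := le_trans hr₀ (le_of_lt hr)
    have hLr : 0 < L r := hLpos r h0r
    have hcr : (0:ℝ) ≤ 2 * Real.pi * lam * r * Real.exp (-(Real.pi * lam * r^2)) := by positivity
    calc (∫⁻ t in Set.Ioi (0:ℝ), ENNReal.ofReal (f₂ t r))
        = ENNReal.ofReal (2 * Real.pi * lam * r * Real.exp (-(Real.pi * lam * r^2))) *
            ∫⁻ t in Set.Ioi (0:ℝ), ENNReal.ofReal (t * (1 + L r * t) ^ (-β)) := by
          rw [← lintegral_const_mul' _ _ ENNReal.ofReal_ne_top]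
          refine lintegral_congr fun t => ?_
          rw [← ENNReal.ofReal_mul hcr]
      _ = ENNReal.ofReal (2 * Real.pi * lam * r * Real.exp (-(Real.pi * lam * r^2))) *
            ENNReal.ofReal (1 / ((L r)^2 * (β - 1) * (β - 2))) := by
          rw [tInt hLr hβ]
      _ = ENNReal.ofReal (2 * Real.pi * lam / ((β - 1) * (β - 2))) *
            ENNReal.ofReal (r / L r ^ 2 * Real.exp (-(Real.pi * lam * r ^ 2))) := by
          rw [← ENNReal.ofReal_mul hcr, ← ENNReal.ofReal_mul (by positivity)]
          congr 1
          have hL0 : L r ≠ 0 := ne_of_gt hLr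
          have h1 : β - 1 ≠ 0 := ne_of_gt hβ1
          have h2 : β - 2 ≠ 0 := ne_of_gt hβ2
          field_simp
  calc (∫⁻ t in Set.Ioi (0 : ℝ), ∫⁻ r in Set.Ioi r₀,
        ENNReal.ofReal (2 * Real.pi * lam * r * t) *
          expNeg (ENNReal.ofReal (Real.pi * lam * r ^ 2) +
            ENNReal.ofReal (2 * Real.pi * lam * t) *
              ∫⁻ x in Set.Ioi r, ENNReal.ofReal (x * L x / (1 + t * L x))))
      ≤ ∫⁻ t in Set.Ioi (0:ℝ), ∫⁻ r in Set.Ioi r₀, ENNReal.ofReal (f₂ t r) := by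
        refine lintegral_mono_ae ((ae_restrict_iff' measurableSet_Ioi).mpr
          (Filter.Eventually.of_forall fun t ht => ?_))
        refine lintegral_mono_ae ((ae_restrict_iff' measurableSet_Ioi).mpr
          (Filter.Eventually.of_forall fun r hr => stepA t ht r hr))
    _ = ∫⁻ r in Set.Ioi r₀, ∫⁻ t in Set.Ioi (0:ℝ), ENNReal.ofReal (f₂ t r) :=
        lintegral_lintegral_swap hf2meas.aemeasurable
    _ = ∫⁻ r in Set.Ioi r₀, ENNReal.ofReal (2 * Real.pi * lam / ((β - 1) * (β - 2))) *
          ENNReal.ofReal (r / L r ^ 2 * Real.exp (-(Real.pi * lam * r ^ 2))) :=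
        setLIntegral_congr_fun measurableSet_Ioi innerEq
    _ = ENNReal.ofReal (2 * Real.pi * lam / ((β - 1) * (β - 2))) *
          ∫⁻ r in Set.Ioi r₀, ENNReal.ofReal (r / L r ^ 2 * Real.exp (-(Real.pi * lam * r ^ 2))) :=
        lintegral_const_mul' _ _ ENNReal.ofReal_ne_top
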